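/- Let G be a directed graph, let x be a feasible rational solution to the DFVS LP (x ≥ 0 and x(C) ≥ 1 for every directed cycle C), and let N be a positive integer with N·x integral. Let C¹ = v_1 v_2 … v_{l'} be a directed cycle with Σ_{v∈C¹} x_v = 1. Then for any two vertices v_i, v_j on C¹, the weighted distance d_ω(v_i, v_j) in G (with weights ω = N·x) equals the weight of the directed path along C¹ from v_i to v_j. -/

import Mathlib

variable {V : Type*}

/-- `l` is a (nonempty) directed closed walk in the digraph with arc relation `E`:
consecutive vertices (cyclically) are joined by arcs. -/
def IsClosedWalk (E : V → V → Prop) (l : List V) : Prop :=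
  l ≠ [] ∧ ∀ i : Fin l.length,
    E (l.get i)
      (l.get ⟨((i : ℕ) + 1) % l.length,
        Nat.mod_lt _ (Nat.lt_of_le_of_lt (Nat.zero_le _) i.isLt)⟩)

/-- A directed cycle: a closed walk with pairwise distinct vertices. -/
def IsDicycle (E : V → V → Prop) (l : List V) : Prop :=
  IsClosedWalk E l ∧ l.Nodup

/-- A (simple) directed path, given as its nonempty list of distinct vertices. -/
def IsPathList (E : V → V → Prop) (l : List V) : Prop :=
  l ≠ [] ∧ l.Chain' E ∧ l.Nodup

/-- The weighted length of a path: the sum of the weights of all its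
vertices except the last one. -/
def pathWeight (ω : V → ℕ) (l : List V) : ℕ :=
  (l.dropLast.map ω).sum

/-- Weighted distance from a set `W` to a vertex `v`: the minimum, over directed
paths from some vertex of `W` to `v`, of the path's weight (vertices of the path
except `v` itself); `∞` if `v` is unreachable from `W`. -/
noncomputable def weightedDist (E : V → V → Prop) (ω : V → ℕ) (W : Set V) (v : V) : ℕ∞ :=
  sInf {n : ℕ∞ | ∃ l : List V, IsPathList E l ∧ (∃ u ∈ W, l.head? = some u) ∧
    l.getLast? = some v ∧ n = (pathWeight ω l : ℕ∞)}

/-- The `i`-th layer from `W`: vertices `v` with `i ≥ d_ω(W,v) > i - ω(v)`. -/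
noncomputable def layer (E : V → V → Prop) (ω : V → ℕ) (W : Set V) (i : ℕ) : Set V :=
  {v | weightedDist E ω W v ≤ (i : ℕ∞) ∧ (i : ℕ∞) < weightedDist E ω W v + (ω v : ℕ∞)}

-- helper: sum over List.range
lemma sum_list_range (g : ℕ → ℕ) (m : ℕ) :
    ((List.range m).map g).sum = ∑ t ∈ Finset.range m, g t := by
  induction m with
  | zero => simp
  | succ k ih =>
    rw [List.range_succ, Finset.sum_range_succ, List.map_append, List.sum_append, ih]
    simp

-- helper: chain + wrap edge gives closed walk
lemma isClosedWalk_of_chain' (E : V → V → Prop) {l : List V} {a b : V}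
    (hc : l.Chain' E) (hh : l.head? = some a) (hg : l.getLast? = some b) (hw : E b a) :
    IsClosedWalk E l := by
  have hne : l ≠ [] := by rintro rfl; simp at hh
  have hlen : 0 < l.length := List.length_pos_of_ne_nil hne
  have ha : l.get ⟨0, hlen⟩ = a := by
    have h1 := List.head?_eq_head (l := l) hne
    rw [h1] at hh
    rw [List.get_eq_getElem, List.getElem_zero]
    exact Option.some_injective _ hh
  have hb : l.get ⟨l.length - 1, by omega⟩ = b := by
    have := List.getLast?_eq_getLast (l := l) hne
    rw [this] at hg
    have := Option.some_injective _ hg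
    rw [← this]
    simp [List.getLast_eq_getElem]
  refine ⟨hne, fun i => ?_⟩
  rcases eq_or_lt_of_le (Nat.succ_le_of_lt i.isLt) with h | h
  · have h0 : ((i : ℕ) + 1) % l.length = 0 := by
      rw [show (i : ℕ) + 1 = l.length by omega, Nat.mod_self]
    have e1 : (⟨((i : ℕ) + 1) % l.length,
        Nat.mod_lt _ (Nat.lt_of_le_of_lt (Nat.zero_le _) i.isLt)⟩ : Fin l.length)
        = ⟨0, hlen⟩ := Fin.ext h0
    have e2 : i = (⟨l.length - 1, by omega⟩ : Fin l.length) := Fin.ext (by simp only []; omega)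
    rw [e1, ha, e2, hb]
    exact hw
  · change List.IsChain E _ at hc
    rw [List.isChain_iff_getElem] at hc
    have h1 := hc i (by omega)
    have e1 : (⟨((i : ℕ) + 1) % l.length,
        Nat.mod_lt _ (Nat.lt_of_le_of_lt (Nat.zero_le _) i.isLt)⟩ : Fin l.length)
        = ⟨(i : ℕ) + 1, h⟩ := Fin.ext (Nat.mod_eq_of_lt h)
    rw [e1]
    exact h1

-- key lemma: every closed walk has weight at least N
lemma closedWalk_weight (E : V → V → Prop) (x : V → ℚ)
    (hfeas : ∀ l : List V, IsDicycle E l → 1 ≤ (l.map x).sum)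
    (N : ℕ) (ω : V → ℕ) (hω : ∀ v, (ω v : ℚ) = (N : ℚ) * x v) :
    ∀ m (L : List V), L.length = m → IsClosedWalk E L → N ≤ (L.map ω).sum := by
  intro m
  induction m using Nat.strong_induction_on with
  | _ m ih =>
    intro L hlen hL
    by_cases hnd : L.Nodup
    · have h1 := hfeas L ⟨hL, hnd⟩
      have h2 : ((L.map ω).sum : ℚ) = (N : ℚ) * (L.map x).sum := by
        clear h1 hlen hL hnd
        induction L with
        | nil => simp
        | cons a t iht => push_cast [List.map_cons, List.sum_cons, hω, mul_add] at *; rw [iht]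
      have h3 : (N : ℚ) ≤ ((L.map ω).sum : ℚ) := by
        rw [h2]
        nlinarith [Nat.cast_nonneg (α := ℚ) N]
      exact_mod_cast h3
    · obtain ⟨a, b, hab, heq⟩ :
          ∃ a b : Fin L.length, (a : ℕ) < (b : ℕ) ∧ L.get a = L.get b := by
        rw [List.nodup_iff_injective_get] at hnd
        simp only [Function.Injective, not_forall] at hnd
        obtain ⟨a, b, heq, hne⟩ := hnd
        rcases lt_or_gt_of_ne (fun h : (a : ℕ) = (b : ℕ) => hne (Fin.ext h)) with h | h
        · exact ⟨a, b, h, heq⟩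
        · exact ⟨b, a, h, heq.symm⟩
      set L' := (L.drop a).take ((b : ℕ) - a) with hL'def
      have hblt : (b : ℕ) < L.length := b.isLt
      have hlen' : L'.length = (b : ℕ) - a := by
        simp only [hL'def, List.length_take, List.length_drop]
        omega
      have hget : ∀ k (hk : k < L'.length), L'.get ⟨k, hk⟩ = L.get ⟨a + k, by omega⟩ := by
        intro k hk
        simp only [hL'def, List.get_eq_getElem, List.getElem_take, List.getElem_drop]
      have hcw : IsClosedWalk E L' := by
        refine ⟨by rw [← List.length_pos_iff_ne_nil]; omega, fun i => ?_⟩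
        have hi := i.isLt
        have ha1 : (a : ℕ) + (i : ℕ) + 1 ≤ (b : ℕ) := by omega
        have hwrap : L'.get ⟨((i : ℕ) + 1) % L'.length,
            Nat.mod_lt _ (Nat.lt_of_le_of_lt (Nat.zero_le _) i.isLt)⟩
            = L.get ⟨((a : ℕ) + (i : ℕ) + 1) % L.length, Nat.mod_lt _ (by omega)⟩ := by
          have hmod : ((a : ℕ) + (i : ℕ) + 1) % L.length = (a : ℕ) + (i : ℕ) + 1 :=
            Nat.mod_eq_of_lt (by omega)
          rcases eq_or_lt_of_le (Nat.succ_le_of_lt i.isLt) with h | h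
          · have h0 : ((i : ℕ) + 1) % L'.length = 0 := by
              rw [show (i : ℕ) + 1 = L'.length by omega, Nat.mod_self]
            have e1 : (⟨((i : ℕ) + 1) % L'.length,
                Nat.mod_lt _ (Nat.lt_of_le_of_lt (Nat.zero_le _) i.isLt)⟩ : Fin L'.length)
                = ⟨0, by omega⟩ := Fin.ext h0
            rw [e1, hget 0 (by omega)]
            have e2 : (⟨a + 0, by omega⟩ : Fin L.length) = a := Fin.ext (by simp)
            rw [e2, heq]
            congr 1
            exact Fin.ext (by simp [hmod]; omega)
          · have h0 : ((i : ℕ) + 1) % L'.length = (i : ℕ) + 1 := Nat.mod_eq_of_lt h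
            have e1 : (⟨((i : ℕ) + 1) % L'.length,
                Nat.mod_lt _ (Nat.lt_of_le_of_lt (Nat.zero_le _) i.isLt)⟩ : Fin L'.length)
                = ⟨(i : ℕ) + 1, h⟩ := Fin.ext h0
            rw [e1, hget ((i : ℕ) + 1) h]
            congr 1
            exact Fin.ext (by simp [hmod]; omega)
        rw [hget i i.isLt, hwrap]
        exact hL.2 ⟨(a : ℕ) + (i : ℕ), by omega⟩
      have hsub : List.Sublist L' L :=
        (List.take_sublist _ _).trans (List.drop_sublist _ _)
      have hsum : (L'.map ω).sum ≤ (L.map ω).sum :=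
        List.Sublist.sum_le_sum (hsub.map ω) (by intro a _; exact Nat.zero_le a)
      have := ih ((b : ℕ) - a) (by omega) L' hlen' hcw
      omega


/-- Let `x` be a feasible rational solution to the DFVS LP and `N > 0` with
`ω = N·x` integral.  If `C¹ = v_1 … v_{l'}` is a directed cycle with
`Σ_{v ∈ C¹} x_v = 1`, then for any two vertices `v_i, v_j` of `C¹` the weighted
distance `d_ω(v_i, v_j)` in `G` equals the weight of the directed subpath of
`C¹` from `v_i` to `v_j`. -/
theorem dist_eq_cycle_weight {V : Type*} [Fintype V] (E : V → V → Prop)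
    (x : V → ℚ) (hx0 : ∀ v, 0 ≤ x v)
    (hfeas : ∀ l : List V, IsDicycle E l → 1 ≤ (l.map x).sum)
    (N : ℕ) (hN : 0 < N) (ω : V → ℕ) (hω : ∀ v, (ω v : ℚ) = (N : ℚ) * x v)
    (n : ℕ) [NeZero n] (c : ZMod n → V) (hinj : Function.Injective c)
    (hadj : ∀ k : ZMod n, E (c k) (c (k + 1)))
    (hsum : ∑ k : ZMod n, x (c k) = 1) :
    ∀ i j : ZMod n,
      weightedDist E ω {c i} (c j)
        = ((∑ t ∈ Finset.range ((j - i).val), ω (c (i + (t : ZMod n))) : ℕ) : ℕ∞) := by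
  have hvalcast : ∀ a : ZMod n, ((a.val : ℕ) : ZMod n) = a := fun a =>
    ZMod.natCast_rightInverse a
  have htot : ∑ k : ZMod n, ω (c k) = N := by
    have h1 : ((∑ k : ZMod n, ω (c k) : ℕ) : ℚ) = (N : ℚ) := by
      push_cast
      simp only [hω, ← Finset.mul_sum, hsum, mul_one]
    exact_mod_cast h1
  intro i j
  set m := (j - i).val with hm
  have hmlt : m < n := ZMod.val_lt _
  have him : i + (m : ZMod n) = j := by rw [hm, hvalcast]; ring
  set S := ∑ t ∈ Finset.range m, ω (c (i + (t : ZMod n))) with hS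
  -- the path along the cycle
  set f : ℕ → V := fun t => c (i + (t : ZMod n)) with hf
  set P := (List.range (m + 1)).map f with hP
  have hPne : P ≠ [] := by simp [hP]
  have hPhead : P.head? = some (c i) := by
    rw [hP, List.range_succ_eq_map]
    simp [hf]
  have hPlast : P.getLast? = some (c j) := by
    rw [hP, List.range_succ, List.map_append]
    simp [hf, him]
  have hPchain : P.Chain' E := by
    change List.IsChain E _
    rw [List.isChain_iff_getElem]
    intro k hk
    simp only [hP, List.length_map, List.length_range] at hk
    simp only [hP, List.get_eq_getElem, List.getElem_map, List.getElem_range, hf]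
    have : i + ((k + 1 : ℕ) : ZMod n) = (i + (k : ZMod n)) + 1 := by push_cast; ring
    rw [this]
    exact hadj _
  have hPnodup : P.Nodup := by
    refine List.Nodup.map_on ?_ List.nodup_range
    intro s hs t ht hst
    simp only [List.mem_range] at hs ht
    have h1 : i + (s : ZMod n) = i + (t : ZMod n) := hinj hst
    have h2 : (s : ZMod n) = (t : ZMod n) := by
      have := add_left_cancel h1
      exact this
    have := congrArg ZMod.val h2
    rwa [ZMod.val_cast_of_lt (by omega), ZMod.val_cast_of_lt (by omega)] at this
  have hPw : pathWeight ω P = S := by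
    rw [pathWeight, hP, List.range_succ, List.map_append]
    simp only [List.map_cons, List.map_nil]
    rw [List.dropLast_concat, List.map_map, sum_list_range]
    rfl
  apply le_antisymm
  · exact sInf_le ⟨P, ⟨hPne, hPchain, hPnodup⟩, ⟨c i, rfl, hPhead⟩, hPlast, by rw [hPw]⟩
  · apply le_sInf
    rintro w ⟨l, ⟨hlne, hlchain, hlnodup⟩, ⟨u, hu, hhead⟩, hlast, rfl⟩
    rw [Set.mem_singleton_iff] at hu
    subst hu
    rw [Nat.cast_le]
    -- show S ≤ pathWeight ω l
    rcases Nat.eq_zero_or_pos m with hm0 | hm0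
    · simp [hS, hm0]
    -- i ≠ j
    have hij : i ≠ j := by
      intro h
      rw [hm, h, sub_self, ZMod.val_zero] at hm0
      omega
    set r := (i - j).val with hr
    have hrpos : 0 < r := by
      rcases Nat.eq_zero_or_pos r with h | h
      · exfalso
        have : i - j = 0 := by
          have := hvalcast (i - j)
          rw [← hr, h] at this
          simpa using this.symm
        exact hij (sub_eq_zero.mp this)
      · exact h
    have hjr : j + (r : ZMod n) = i := by rw [hr, hvalcast]; ring
    have hmr : m + r = n := by
      have h1 : i - j = -(j - i) := by ring
      have h2 : j - i ≠ 0 := sub_ne_zero.mpr (Ne.symm hij)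
      rw [hr, h1, ZMod.neg_val, if_neg h2, ← hm] at *
      omega
    set S' := ∑ t ∈ Finset.range r, ω (c (j + (t : ZMod n))) with hS'
    have hsplit : S + S' = N := by
      have h1 : ∑ t ∈ Finset.range n, ω (c (i + (t : ZMod n))) = ∑ k : ZMod n, ω (c k) := by
        refine Finset.sum_nbij' (i := fun t => i + (t : ZMod n)) (j := fun k => (k - i).val)
          (fun t _ => Finset.mem_univ _) (fun k _ => Finset.mem_range.mpr (ZMod.val_lt _))
          ?_ ?_ (fun t _ => rfl)
        · intro t ht
          rw [Finset.mem_range] at ht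
          show ((i + (t : ZMod n)) - i).val = t
          rw [add_sub_cancel_left, ZMod.val_cast_of_lt ht]
        · intro k _
          show i + (((k - i).val : ℕ) : ZMod n) = k
          rw [hvalcast]; ring
      have h1b : ∑ t ∈ Finset.range (m + r), ω (c (i + (t : ZMod n))) = N := by
        rw [hmr, h1, htot]
      rw [Finset.sum_range_add] at h1b
      have h2 : ∀ t ∈ Finset.range r, ω (c (i + ((m + t : ℕ) : ZMod n)))
          = ω (c (j + (t : ZMod n))) := by
        intro t _
        congr 2
        push_cast
        rw [← add_assoc, him]
      rw [Finset.sum_congr rfl h2] at h1b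
      rw [hS, hS', h1b]
    -- build the closed walk
    have hlastcj : ∀ y, l.getLast? = some y → y = c j := by
      intro y hy; rw [hy] at hlast; exact Option.some_injective _ hlast
    obtain ⟨k, hkr⟩ : ∃ k, k + 1 = r := ⟨r - 1, by omega⟩
    set g : ℕ → V := fun t => c (j + 1 + (t : ZMod n)) with hg
    set M := (List.range k).map g with hM
    set L := l ++ M with hL
    have hMchain : M.Chain' E := by
      change List.IsChain E _
      rw [List.isChain_iff_getElem]
      intro s hs
      simp only [hM, List.length_map, List.length_range] at hs
      simp only [hM, List.get_eq_getElem, List.getElem_map, List.getElem_range, hg]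
      have : j + 1 + ((s + 1 : ℕ) : ZMod n) = (j + 1 + (s : ZMod n)) + 1 := by push_cast; ring
      rw [this]
      exact hadj _
    have hLchain : L.Chain' E := by
      refine List.IsChain.append hlchain hMchain ?_
      intro y hy z hz
      have hy' : y = c j := hlastcj y hy
      rcases Nat.eq_zero_or_pos k with hk0 | hk0
      · exfalso; simp [hM, hk0] at hz
      · have : M.head? = some (c (j + 1)) := by
          obtain ⟨k', rfl⟩ : ∃ k', k = k' + 1 := ⟨k - 1, by omega⟩
          rw [hM, List.range_succ_eq_map]
          simp [hg]
        rw [this] at hz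
        have hz' : z = c (j + 1) :=
          (Option.some_injective _ (Option.mem_def.mp hz)).symm
        rw [hy', hz']
        exact hadj j
    have hLhead : L.head? = some (c i) := by
      rw [hL, List.head?_append_of_ne_nil _ hlne]
      exact hhead
    have hLwrap : ∃ b, L.getLast? = some b ∧ E b (c i) := by
      rcases Nat.eq_zero_or_pos k with hk0 | hk0
      · refine ⟨c j, ?_, ?_⟩
        · rw [hL]
          have : M = [] := by simp [hM, hk0]
          rw [this, List.append_nil]
          exact hlast
        · have h1 : j + 1 = i := by
            rw [← hjr, ← hkr, hk0]
            push_cast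
            ring
          rw [← h1]
          exact hadj j
      · obtain ⟨k', hk'⟩ : ∃ k', k = k' + 1 := ⟨k - 1, by omega⟩
        refine ⟨g k', ?_, ?_⟩
        · rw [hL, List.getLast?_append_of_ne_nil _ (by simp [hM, hk'])]
          rw [hM, hk', List.range_succ, List.map_append]
          simp
        · have h2 : (j + 1 + (k' : ZMod n)) + 1 = i := by
            rw [← hjr, ← hkr, hk']
            push_cast
            ring
          show E (c (j + 1 + (k' : ZMod n))) (c i)
          rw [← h2]
          exact hadj _
    obtain ⟨b, hLlast, hEb⟩ := hLwrap
    have hLcw : IsClosedWalk E L := isClosedWalk_of_chain' E hLchain hLhead hLlast hEb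
    have hLw : (L.map ω).sum = pathWeight ω l + S' := by
      rw [hL, List.map_append, List.sum_append]
      have h1 : (l.map ω).sum = pathWeight ω l + ω (c j) := by
        have hmem : c j ∈ l.getLast? := by rw [Option.mem_def]; exact hlast
        conv_lhs => rw [← List.dropLast_append_getLast? _ hmem]
        rw [List.map_append, List.sum_append]
        simp [pathWeight]
      have h2 : (M.map ω).sum = ∑ t ∈ Finset.range k, ω (g t) := by
        rw [hM, List.map_map, sum_list_range]
        rfl
      have h3 : ω (c j) + ∑ t ∈ Finset.range k, ω (g t) = S' := by
        rw [hS', ← hkr, Finset.sum_range_succ']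
        have h4 : ∀ t ∈ Finset.range k, ω (c (j + ((t + 1 : ℕ) : ZMod n))) = ω (g t) := by
          intro t _
          rw [hg]
          congr 2
          push_cast
          ring
        rw [Finset.sum_congr rfl h4]
        simp
        ring
      omega
    have hge := closedWalk_weight E x hfeas N ω hω L.length L rfl hLcw
    omega
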